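/- Let φ be an N-function that is C² on (0,∞), satisfies the Δ₂-condition with constant D, and is uniformly convex with constants 0 < c ≤ C. Define ψ(t) = ∫₀ᵗ √(s φ'(s)) ds and V : ℝ → ℝ by V(s) = ψ'(|s|) s/|s| for s ≠ 0 and V(0) = 0. Then the pair (ψ, V) satisfies the orthotropic growth conditions with constants depending only on c, C, D; that is, for all s, t ∈ ℝ: (V(s) − V(t))(s − t) ≥ c' ψ''(|s| + |t|)|s − t|² and |V(s) − V(t)| ≤ C' ψ''(|s| + |t|)|s − t| (terms interpreted as 0 when s = t). -/

import Mathlib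

open MeasureTheory

/-- An N-function `Φ` with derivative `Φ'`: differentiable on `[0,∞)` with
`Φ(0) = 0`, `Φ(t) = ∫₀ᵗ Φ'(s) ds`, `Φ'` nondecreasing, right-continuous,
`Φ'(0) = 0` and `Φ'(t) > 0` for `t > 0`. -/
structure IsNFunction (Φ Φ' : ℝ → ℝ) : Prop where
  map_zero : Φ 0 = 0
  eq_integral : ∀ t : ℝ, 0 ≤ t → Φ t = ∫ s in (0:ℝ)..t, Φ' s
  deriv_zero : Φ' 0 = 0
  deriv_pos : ∀ t : ℝ, 0 < t → 0 < Φ' t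
  deriv_mono : MonotoneOn Φ' (Set.Ici 0)
  deriv_rightCont : ∀ t : ℝ, 0 ≤ t → ContinuousWithinAt Φ' (Set.Ici t) t

/-- The Δ₂-condition with constant `D`. -/
def Delta2 (Φ : ℝ → ℝ) (D : ℝ) : Prop := ∀ t : ℝ, 0 < t → Φ (2 * t) ≤ D * Φ t

/-- Uniform convexity with constants `c ≤ C`: `c Φ'(t) ≤ t Φ''(t) ≤ C Φ'(t)` for `t > 0`. -/
def UniformlyConvex (Φ' Φ'' : ℝ → ℝ) (c C : ℝ) : Prop :=
  ∀ t : ℝ, 0 < t → c * Φ' t ≤ t * Φ'' t ∧ t * Φ'' t ≤ C * Φ' t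

/-- The orthotropic growth conditions for the pair `(φ, A)` with constants `c ≤ C`
(all terms vanish when `ξ = η`). -/
def OrthotropicGrowth (Φ'' A : ℝ → ℝ) (c C : ℝ) : Prop :=
  ∀ ξ η : ℝ, c * (Φ'' (|ξ| + |η|) * |ξ - η| ^ 2) ≤ (A ξ - A η) * (ξ - η) ∧
    |A ξ - A η| ≤ C * (Φ'' (|ξ| + |η|) * |ξ - η|)

/-- `ψ'(t) = √(t Φ'(t))`. -/
noncomputable def psiDeriv (Φ' : ℝ → ℝ) (t : ℝ) : ℝ := Real.sqrt (t * Φ' t)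

/-- `ψ(t) = ∫₀ᵗ √(s Φ'(s)) ds`. -/
noncomputable def psiOf (Φ' : ℝ → ℝ) (t : ℝ) : ℝ := ∫ s in (0:ℝ)..t, psiDeriv Φ' s

/-- `V(s) = ψ'(|s|) s/|s|` for `s ≠ 0`, `V(0) = 0`. -/
noncomputable def Vof (Φ' : ℝ → ℝ) (s : ℝ) : ℝ :=
  if s = 0 then 0 else psiDeriv Φ' |s| * s / |s|


lemma gap_lower {x γ : ℝ} (hx0 : 0 ≤ x) (hx1 : x ≤ 1) (hγ : 0 < γ) :
    min γ 1 * (1 - x) ≤ 1 - x ^ γ := by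
  rcases le_or_gt γ 1 with h | h
  · rw [min_eq_left h]
    have := rpow_one_add_le_one_add_mul_self (s := x - 1) (by linarith) hγ.le h
    simp only [add_sub_cancel] at this
    nlinarith [this]
  · rw [min_eq_right h.le]
    rcases eq_or_lt_of_le hx0 with h0 | h0
    · rw [← h0, Real.zero_rpow hγ.ne']; norm_num
    · have := Real.rpow_le_rpow_of_exponent_ge h0 hx1 h.le
      rw [Real.rpow_one] at this
      linarith

lemma gap_upper {x γ : ℝ} (hx0 : 0 ≤ x) (hx1 : x ≤ 1) (hγ : 0 < γ) :
    1 - x ^ γ ≤ max γ 1 * (1 - x) := by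
  rcases le_or_gt 1 γ with h | h
  · rw [max_eq_left h]
    have := one_add_mul_self_le_rpow_one_add (s := x - 1) (by linarith) h
    simp only [add_sub_cancel] at this
    nlinarith [this]
  · rw [max_eq_right h.le]
    rcases eq_or_lt_of_le hx0 with h0 | h0
    · rw [← h0, Real.zero_rpow (by positivity : γ ≠ 0)]; linarith
    · have := Real.rpow_le_rpow_of_exponent_ge h0 hx1 h.le
      rw [Real.rpow_one] at this
      linarith

set_option maxHeartbeats 3000000 in
/-- the pair `(ψ, V)`, with `ψ(t) = ∫₀ᵗ √(s φ'(s)) ds` and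
`V(s) = ψ'(|s|) s/|s|`, satisfies the orthotropic growth conditions with constants
depending only on `c, C, D`. -/
theorem statement6 (c C D : ℝ) (hc : 0 < c) (hcC : c ≤ C) (hD : 0 < D) :
    ∃ c' C' : ℝ, 0 < c' ∧ c' ≤ C' ∧
      ∀ (φ φ' φ'' : ℝ → ℝ),
        IsNFunction φ φ' →
        ContDiffOn ℝ 2 φ (Set.Ioi 0) →
        (∀ t : ℝ, 0 < t → HasDerivAt φ (φ' t) t) →
        (∀ t : ℝ, 0 < t → HasDerivAt φ' (φ'' t) t) →
        Delta2 φ D →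
        UniformlyConvex φ' φ'' c C →
        ∃ ψ'' : ℝ → ℝ,
          (∀ t : ℝ, 0 < t → HasDerivAt (psiDeriv φ') (ψ'' t) t) ∧
          OrthotropicGrowth ψ'' (Vof φ') c' C' := by
  have hα : (0:ℝ) < (1 + c) / 2 := by linarith
  have hβpos : (0:ℝ) < (1 + C) / 2 := by linarith
  set α := (1 + c) / 2 with hαdef
  set β := (1 + C) / 2 with hβdef
  set m := min (min α 1) 2⁻¹ with hmdef
  set M := max (max β 1) 2 with hMdef
  have hm : 0 < m := lt_min (lt_min hα one_pos) (by norm_num)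
  have hm1 : m ≤ min α 1 := min_le_left _ _
  have hm2 : m ≤ 2⁻¹ := min_le_right _ _
  have hM1 : max β 1 ≤ M := le_max_left _ _
  have hM2 : (2:ℝ) ≤ M := le_max_right _ _
  have hMpos : (0:ℝ) < M := lt_of_lt_of_le two_pos hM2
  have hβD : 0 < β * D := mul_pos hβpos hD
  refine ⟨min (m / (β * D)) (2 * M / α), 2 * M / α,
    lt_min (div_pos hm hβD) (div_pos (by linarith) hα), min_le_right _ _, ?_⟩
  intro φ φ' φ'' hN _hC2 hdφ hdφ' hΔ hUC
  -- basic facts about φ' and g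
  have hφ'nn : ∀ t : ℝ, 0 ≤ t → 0 ≤ φ' t := fun t ht => by
    have := hN.deriv_mono Set.self_mem_Ici (Set.mem_Ici.2 ht) ht
    rwa [hN.deriv_zero] at this
  set g := psiDeriv φ' with hgdef
  have hgnn : ∀ t : ℝ, 0 ≤ g t := fun t => Real.sqrt_nonneg _
  have hg0 : g 0 = 0 := by rw [hgdef]; simp [psiDeriv]
  have hgpos : ∀ t : ℝ, 0 < t → 0 < g t := fun t ht =>
    Real.sqrt_pos.2 (mul_pos ht (hN.deriv_pos t ht))
  have hgsq : ∀ t : ℝ, 0 ≤ t → g t ^ 2 = t * φ' t := fun t ht =>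
    Real.sq_sqrt (mul_nonneg ht (hφ'nn t ht))
  have hgmono : ∀ a b : ℝ, 0 ≤ a → a ≤ b → g a ≤ g b := fun a b ha hab =>
    Real.sqrt_le_sqrt (mul_le_mul hab
      (hN.deriv_mono (Set.mem_Ici.2 ha) (Set.mem_Ici.2 (ha.trans hab)) hab)
      (hφ'nn a ha) (ha.trans hab))
  set ψ'' := fun t : ℝ => (φ' t + t * φ'' t) / (2 * g t) with hψdef
  have hgderiv : ∀ t : ℝ, 0 < t → HasDerivAt g (ψ'' t) t := by
    intro t ht
    have h1 : HasDerivAt (fun y : ℝ => y * φ' y) (1 * φ' t + t * φ'' t) t :=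
      (hasDerivAt_id t).mul (hdφ' t ht)
    have h2 := h1.sqrt (ne_of_gt (mul_pos ht (hN.deriv_pos t ht)))
    rw [hgdef, hψdef]
    show HasDerivAt (fun y => Real.sqrt (y * φ' y)) _ t
    simpa [psiDeriv, one_mul, hgdef] using h2
  have hφg : ∀ t : ℝ, 0 < t → φ' t / g t = g t / t := by
    intro t ht
    rw [div_eq_div_iff (hgpos t ht).ne' ht.ne']
    have h := hgsq t ht.le
    nlinarith [h]
  have hψlb : ∀ t : ℝ, 0 < t → α * (g t / t) ≤ ψ'' t := by
    intro t ht
    have h1 := (hUC t ht).1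
    have hgt := hgpos t ht
    calc α * (g t / t) = ((1 + c) * φ' t) / (2 * g t) := by
          rw [← hφg t ht, hαdef]; ring
      _ ≤ (φ' t + t * φ'' t) / (2 * g t) :=
          (div_le_div_iff_of_pos_right (by linarith : (0:ℝ) < 2 * g t)).2 (by linarith)
      _ = ψ'' t := rfl
  have hψub : ∀ t : ℝ, 0 < t → ψ'' t ≤ β * (g t / t) := by
    intro t ht
    have h1 := (hUC t ht).2
    have hgt := hgpos t ht
    calc ψ'' t = (φ' t + t * φ'' t) / (2 * g t) := rfl
      _ ≤ ((1 + C) * φ' t) / (2 * g t) :=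
          (div_le_div_iff_of_pos_right (by linarith : (0:ℝ) < 2 * g t)).2 (by linarith)
      _ = β * (g t / t) := by rw [← hφg t ht, hβdef]; ring
  have hψpos : ∀ t : ℝ, 0 < t → 0 < ψ'' t := fun t ht =>
    lt_of_lt_of_le (mul_pos hα (div_pos (hgpos t ht) ht)) (hψlb t ht)
  -- integral facts and doubling
  have hint : ∀ a b : ℝ, 0 ≤ a → a ≤ b → IntervalIntegrable φ' volume a b := by
    intro a b ha hab
    apply MonotoneOn.intervalIntegrable
    intro x hx y hy hxy
    rw [Set.uIcc_of_le hab] at hx hy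
    exact hN.deriv_mono (Set.mem_Ici.2 (ha.trans hx.1)) (Set.mem_Ici.2 (ha.trans hy.1)) hxy
  have hupper : ∀ x : ℝ, 0 ≤ x → φ x ≤ x * φ' x := by
    intro x hx
    rw [hN.eq_integral x hx]
    calc (∫ s in (0:ℝ)..x, φ' s) ≤ ∫ _s in (0:ℝ)..x, φ' x := by
          apply intervalIntegral.integral_mono_on hx (hint 0 x le_rfl hx) intervalIntegrable_const
          intro y hy
          exact hN.deriv_mono (Set.mem_Ici.2 hy.1) (Set.mem_Ici.2 hx) hy.2
      _ = x * φ' x := by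
          rw [intervalIntegral.integral_const, smul_eq_mul, sub_zero]
  have hlow : ∀ x : ℝ, 0 < x → x * φ' x ≤ φ (2 * x) := by
    intro x hx
    have hx2 : (0:ℝ) ≤ 2 * x := by linarith
    rw [hN.eq_integral _ hx2]
    have hsplit : (∫ s in (0:ℝ)..x, φ' s) + (∫ s in x..(2*x), φ' s)
        = ∫ s in (0:ℝ)..(2*x), φ' s :=
      intervalIntegral.integral_add_adjacent_intervals (hint 0 x le_rfl hx.le)
        (hint x (2*x) hx.le (by linarith))
    have h1 : 0 ≤ ∫ s in (0:ℝ)..x, φ' s :=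
      intervalIntegral.integral_nonneg hx.le (fun y hy => hφ'nn y hy.1)
    have h2 : x * φ' x ≤ ∫ s in x..(2*x), φ' s := by
      have e : (∫ _s in x..(2*x), φ' x) = x * φ' x := by
        rw [intervalIntegral.integral_const, smul_eq_mul]; ring
      rw [← e]
      apply intervalIntegral.integral_mono_on (by linarith) intervalIntegrable_const
        (hint x (2*x) hx.le (by linarith))
      intro y hy
      exact hN.deriv_mono (Set.mem_Ici.2 hx.le) (Set.mem_Ici.2 (hx.le.trans hy.1)) hy.1
    linarith
  have hgdbl : ∀ x : ℝ, 0 < x → g (2 * x) ≤ D * g x := by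
    intro x hx
    have h1 : 2 * x * φ' (2 * x) ≤ D ^ 2 * (x * φ' x) := by
      have ha := hlow (2 * x) (by linarith)
      have hb := hΔ (2 * x) (by linarith)
      have hc2 := hΔ x hx
      have hd2 := hupper x hx.le
      have e1 := mul_le_mul_of_nonneg_left hc2 hD.le
      have e2 := mul_le_mul_of_nonneg_left hd2 (mul_nonneg hD.le hD.le)
      nlinarith
    calc g (2*x) = Real.sqrt (2 * x * φ' (2*x)) := by rw [hgdef]; rfl
      _ ≤ Real.sqrt (D ^ 2 * (x * φ' x)) := Real.sqrt_le_sqrt h1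
      _ = D * g x := by
          rw [Real.sqrt_mul (sq_nonneg D), Real.sqrt_sq hD.le, hgdef]; rfl
  -- ratio monotonicity via rpow
  have hDer : ∀ (γ : ℝ) (x : ℝ), 0 < x → HasDerivAt (fun y : ℝ => g y / y ^ γ)
      ((ψ'' x * x ^ γ - g x * (γ * x ^ (γ - 1))) / (x ^ γ) ^ 2) x := by
    intro γ x hx
    exact (hgderiv x hx).div (Real.hasDerivAt_rpow_const (Or.inl hx.ne'))
      (Real.rpow_pos_of_pos hx γ).ne'
  have hratA : ∀ s t : ℝ, 0 < t → t ≤ s → g t / t ^ α ≤ g s / s ^ α := by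
    intro s t ht hts
    have key : MonotoneOn (fun y : ℝ => g y / y ^ α) (Set.Icc t s) := by
      apply monotoneOn_of_deriv_nonneg (convex_Icc t s)
      · intro x hx
        exact (hDer α x (lt_of_lt_of_le ht hx.1)).continuousAt.continuousWithinAt
      · intro x hx
        rw [interior_Icc] at hx
        exact (hDer α x (lt_trans ht hx.1)).differentiableAt.differentiableWithinAt
      · intro x hx
        rw [interior_Icc] at hx
        have hx0 : 0 < x := lt_trans ht hx.1
        rw [(hDer α x hx0).deriv]
        apply div_nonneg ?_ (sq_nonneg _)
        have h1 := hψlb x hx0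
        have h2 : x ^ (α - 1) = x ^ α / x := Real.rpow_sub_one hx0.ne' α
        have h3 : (0:ℝ) < x ^ α := Real.rpow_pos_of_pos hx0 α
        rw [h2]
        have e : g x * (α * (x ^ α / x)) = (α * (g x / x)) * x ^ α := by ring
        rw [e]
        nlinarith [mul_le_mul_of_nonneg_right h1 h3.le]
    exact key (Set.left_mem_Icc.2 hts) (Set.right_mem_Icc.2 hts) hts
  have hratB : ∀ s t : ℝ, 0 < t → t ≤ s → g s / s ^ β ≤ g t / t ^ β := by
    intro s t ht hts
    have key : AntitoneOn (fun y : ℝ => g y / y ^ β) (Set.Icc t s) := by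
      apply antitoneOn_of_deriv_nonpos (convex_Icc t s)
      · intro x hx
        exact (hDer β x (lt_of_lt_of_le ht hx.1)).continuousAt.continuousWithinAt
      · intro x hx
        rw [interior_Icc] at hx
        exact (hDer β x (lt_trans ht hx.1)).differentiableAt.differentiableWithinAt
      · intro x hx
        rw [interior_Icc] at hx
        have hx0 : 0 < x := lt_trans ht hx.1
        rw [(hDer β x hx0).deriv]
        apply div_nonpos_of_nonpos_of_nonneg ?_ (sq_nonneg _)
        have h1 := hψub x hx0
        have h2 : x ^ (β - 1) = x ^ β / x := Real.rpow_sub_one hx0.ne' β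
        have h3 : (0:ℝ) < x ^ β := Real.rpow_pos_of_pos hx0 β
        rw [h2]
        have e : g x * (β * (x ^ β / x)) = (β * (g x / x)) * x ^ β := by ring
        rw [e]
        nlinarith [mul_le_mul_of_nonneg_right h1 h3.le]
    exact key (Set.left_mem_Icc.2 hts) (Set.right_mem_Icc.2 hts) hts
  -- key same-sign estimate
  have hKey : ∀ s t : ℝ, 0 ≤ t → t < s →
      min α 1 * (g s / s) * (s - t) ≤ g s - g t ∧
        g s - g t ≤ max β 1 * (g s / s) * (s - t) := by
    intro s t ht hts
    have hs : 0 < s := lt_of_le_of_lt ht hts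
    rcases eq_or_lt_of_le ht with h0 | h0
    · subst h0
      rw [hg0, sub_zero, sub_zero]
      have hgs : g s / s * s = g s := div_mul_cancel₀ _ hs.ne'
      constructor
      · calc min α 1 * (g s / s) * s = min α 1 * (g s / s * s) := by ring
          _ = min α 1 * g s := by rw [hgs]
          _ ≤ 1 * g s := mul_le_mul_of_nonneg_right (min_le_right α 1) (hgnn s)
          _ = g s := one_mul _
      · calc g s = 1 * g s := (one_mul _).symm
          _ ≤ max β 1 * g s := mul_le_mul_of_nonneg_right (le_max_right β 1) (hgnn s)
          _ = max β 1 * (g s / s * s) := by rw [hgs]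
          _ = max β 1 * (g s / s) * s := by ring
    · have hx0 : (0:ℝ) ≤ t / s := by positivity
      have hx1 : t / s ≤ 1 := (div_le_one hs).2 hts.le
      have hsα : (0:ℝ) < s ^ α := Real.rpow_pos_of_pos hs α
      have htα : (0:ℝ) < t ^ α := Real.rpow_pos_of_pos h0 α
      have hsβ : (0:ℝ) < s ^ β := Real.rpow_pos_of_pos hs β
      have htβ : (0:ℝ) < t ^ β := Real.rpow_pos_of_pos h0 β
      have hgt_ub : g t ≤ g s * (t / s) ^ α := by
        have h := hratA s t h0 hts.le
        rw [div_le_div_iff₀ htα hsα] at h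
        rw [Real.div_rpow h0.le hs.le, ← mul_div_assoc, le_div_iff₀ hsα]
        exact h
      have hgt_lb : g s * (t / s) ^ β ≤ g t := by
        have h := hratB s t h0 hts.le
        rw [div_le_div_iff₀ hsβ htβ] at h
        rw [Real.div_rpow h0.le hs.le, ← mul_div_assoc, div_le_iff₀ hsβ]
        exact h
      have hgap1 := gap_lower hx0 hx1 hα
      have hgap2 := gap_upper hx0 hx1 hβpos
      constructor
      · calc min α 1 * (g s / s) * (s - t) = g s * (min α 1 * (1 - t/s)) := by
              rw [one_sub_div hs.ne']; ring
          _ ≤ g s * (1 - (t/s) ^ α) := mul_le_mul_of_nonneg_left hgap1 (hgnn s)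
          _ = g s - g s * (t/s) ^ α := by ring
          _ ≤ g s - g t := by linarith
      · calc g s - g t ≤ g s - g s * (t/s) ^ β := by linarith
          _ = g s * (1 - (t/s) ^ β) := by ring
          _ ≤ g s * (max β 1 * (1 - t/s)) := mul_le_mul_of_nonneg_left hgap2 (hgnn s)
          _ = max β 1 * (g s / s) * (s - t) := by rw [one_sub_div hs.ne']; ring
  -- facts about V
  set V := Vof φ' with hVdef
  have hVpos : ∀ s : ℝ, 0 < s → V s = g s := by
    intro s hs
    rw [hVdef, hgdef]
    simp only [Vof, if_neg hs.ne', abs_of_pos hs]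
    rw [mul_div_assoc, div_self hs.ne', mul_one]
  have hV0 : V 0 = 0 := by rw [hVdef]; simp [Vof]
  have hVneg : ∀ s : ℝ, s < 0 → V s = - g (-s) := by
    intro s hs
    rw [hVdef, hgdef]
    simp only [Vof, if_neg hs.ne, abs_of_neg hs]
    rw [div_neg, mul_div_assoc, div_self hs.ne, mul_one]
  have hVodd : ∀ x : ℝ, V (-x) = - V x := by
    intro x
    rcases lt_trichotomy x 0 with h | h | h
    · rw [hVneg x h, hVpos (-x) (by linarith), neg_neg]
    · rw [h, neg_zero, hV0, neg_zero]
    · rw [hVpos x h, hVneg (-x) (by linarith), neg_neg]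
  -- key estimate for s positive
  have keyPos : ∀ s t : ℝ, |t| ≤ |s| → s ≠ t → 0 < s →
      m * (g s / s) * (s - t) ^ 2 ≤ (V s - V t) * (s - t) ∧
        |V s - V t| ≤ M * (g s / s) * |s - t| := by
    intro s t hst hne hs
    have hts : |t| ≤ s := by rwa [abs_of_pos hs] at hst
    have hq : (0:ℝ) ≤ g s / s := div_nonneg (hgnn s) hs.le
    rcases le_or_gt 0 t with ht | ht
    · have ht' : t < s := lt_of_le_of_ne (le_trans (le_abs_self t) hts) (Ne.symm hne)
      have hVt : V t = g t := by
        rcases eq_or_lt_of_le ht with h0 | h0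
        · rw [← h0, hV0, hg0]
        · exact hVpos t h0
      have hVs := hVpos s hs
      obtain ⟨k1, k2⟩ := hKey s t ht ht'
      rw [hVs, hVt]
      constructor
      · have h1 : m * (g s / s) * (s - t) ≤ min α 1 * (g s / s) * (s - t) :=
          mul_le_mul_of_nonneg_right (mul_le_mul_of_nonneg_right hm1 hq) (by linarith)
        calc m * (g s / s) * (s - t) ^ 2 = (m * (g s / s) * (s - t)) * (s - t) := by ring
          _ ≤ (g s - g t) * (s - t) :=
              mul_le_mul_of_nonneg_right (h1.trans k1) (by linarith)
      · have hmono' : 0 ≤ g s - g t := by linarith [hgmono t s ht ht'.le]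
        rw [abs_of_nonneg hmono', abs_of_pos (by linarith : (0:ℝ) < s - t)]
        calc g s - g t ≤ max β 1 * (g s / s) * (s - t) := k2
          _ ≤ M * (g s / s) * (s - t) :=
              mul_le_mul_of_nonneg_right (mul_le_mul_of_nonneg_right hM1 hq) (by linarith)
    · have hVt := hVneg t ht
      have hVs := hVpos s hs
      have hnt : (0:ℝ) < -t := by linarith
      have hgt : (0:ℝ) ≤ g (-t) := hgnn _
      have hts' : -t ≤ s := by rwa [abs_of_neg ht] at hts
      have hgts : g (-t) ≤ g s := hgmono (-t) s hnt.le hts'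
      have hst2 : s - t ≤ 2 * s := by linarith
      have hstpos : (0:ℝ) < s - t := by linarith
      rw [hVs, hVt, sub_neg_eq_add]
      constructor
      · rw [show m * (g s / s) * (s - t) ^ 2 = m * g s * (s - t) ^ 2 / s by ring,
          div_le_iff₀ hs]
        nlinarith [mul_nonneg (hgnn s) hstpos.le,
          mul_nonneg hgt (mul_pos hstpos hs).le,
          mul_le_mul_of_nonneg_left hst2 (mul_nonneg (hgnn s) hstpos.le),
          mul_le_mul_of_nonneg_right hm2 (mul_nonneg (hgnn s) (sq_nonneg (s - t)))]
      · rw [abs_of_nonneg (add_nonneg (hgnn s) hgt), abs_of_pos hstpos,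
          show M * (g s / s) * (s - t) = M * g s * (s - t) / s by ring, le_div_iff₀ hs]
        have e1 : (g s + g (-t)) * s ≤ 2 * g s * s :=
          mul_le_mul_of_nonneg_right (by linarith) hs.le
        have e2 : 2 * g s * s ≤ 2 * g s * (s - t) :=
          mul_le_mul_of_nonneg_left (by linarith) (by linarith [hgnn s])
        have e3 : 2 * (g s * (s - t)) ≤ M * (g s * (s - t)) :=
          mul_le_mul_of_nonneg_right hM2 (mul_nonneg (hgnn s) hstpos.le)
        nlinarith
  -- key estimate in general
  have key : ∀ s t : ℝ, |t| ≤ |s| → s ≠ t →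
      m * (g |s| / |s|) * (s - t) ^ 2 ≤ (V s - V t) * (s - t) ∧
        |V s - V t| ≤ M * (g |s| / |s|) * |s - t| := by
    intro s t hst hne
    rcases lt_trichotomy s 0 with hs | hs | hs
    · have h := keyPos (-s) (-t) (by simpa using hst)
        (fun hh => hne (neg_inj.1 hh)) (by linarith)
      rw [abs_of_neg hs]
      constructor
      · calc m * (g (-s) / -s) * (s - t) ^ 2 = m * (g (-s) / -s) * (-s - -t) ^ 2 := by ring
          _ ≤ (V (-s) - V (-t)) * (-s - -t) := h.1
          _ = (V s - V t) * (s - t) := by rw [hVodd s, hVodd t]; ring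
      · have h2 := h.2
        rw [hVodd s, hVodd t] at h2
        have e1 : |-V s - -V t| = |V s - V t| := by
          rw [show -V s - -V t = -(V s - V t) by ring, abs_neg]
        have e2 : |-s - -t| = |s - t| := by
          rw [show -s - -t = -(s - t) by ring, abs_neg]
        rwa [e1, e2] at h2
    · exfalso
      apply hne
      have ht0 : t = 0 := by
        have : |t| ≤ 0 := by simpa [hs] using hst
        exact abs_eq_zero.1 (le_antisymm this (abs_nonneg t))
      rw [hs, ht0]
    · rw [abs_of_pos hs]
      exact keyPos s t hst hne hs
  -- comparison of ψ'' with g r / r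
  have hcomp : ∀ r u : ℝ, 0 < r → r ≤ u → u ≤ 2 * r →
      α * (g r / r) / 2 ≤ ψ'' u ∧ ψ'' u ≤ β * D * (g r / r) := by
    intro r u hr hru hu2
    have hu : 0 < u := lt_of_lt_of_le hr hru
    constructor
    · have h1 := hψlb u hu
      have h2 : g r / (2 * r) ≤ g u / u :=
        div_le_div₀ (hgnn u) (hgmono r u hr.le hru) hu hu2
      have e : α * (g r / r) / 2 = α * (g r / (2 * r)) := by
        rw [mul_div_assoc, div_div, mul_comm r 2]
      rw [e]
      exact (mul_le_mul_of_nonneg_left h2 hα.le).trans h1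
    · have h1 := hψub u hu
      have h2 : g u / u ≤ D * g r / r :=
        div_le_div₀ (mul_nonneg hD.le (hgnn r))
          ((hgmono u (2*r) hu.le hu2).trans (hgdbl r hr)) hr hru
      calc ψ'' u ≤ β * (g u / u) := h1
        _ ≤ β * (D * g r / r) := mul_le_mul_of_nonneg_left h2 hβpos.le
        _ = β * D * (g r / r) := by ring
  -- conclusion
  refine ⟨ψ'', fun t ht => hgderiv t ht, ?_⟩
  intro ξ η
  rcases eq_or_ne ξ η with heq | hne
  · subst heq
    constructor <;> simp
  · obtain ⟨r, hr, hru, hur, h1, h2⟩ : ∃ r, 0 < r ∧ r ≤ |ξ| + |η| ∧ |ξ| + |η| ≤ 2 * r ∧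
        m * (g r / r) * (ξ - η) ^ 2 ≤ (V ξ - V η) * (ξ - η) ∧
        |V ξ - V η| ≤ M * (g r / r) * |ξ - η| := by
      rcases le_total |η| |ξ| with h | h
      · have hk := key ξ η h hne
        have hξ0 : ξ ≠ 0 := by
          intro h0
          apply hne
          rw [h0]
          have : |η| = 0 := le_antisymm (by simpa [h0] using h) (abs_nonneg η)
          rw [eq_comm, ← abs_eq_zero, this]
        exact ⟨|ξ|, abs_pos.2 hξ0, by linarith [abs_nonneg η], by linarith [abs_nonneg η],
          hk.1, hk.2⟩
      · have hk := key η ξ h hne.symm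
        have hη0 : η ≠ 0 := by
          intro h0
          apply hne
          rw [h0]
          have : |ξ| = 0 := le_antisymm (by simpa [h0] using h) (abs_nonneg ξ)
          rw [← abs_eq_zero, this]
        refine ⟨|η|, abs_pos.2 hη0, by linarith [abs_nonneg ξ], by linarith [abs_nonneg ξ],
          ?_, ?_⟩
        · calc m * (g |η| / |η|) * (ξ - η) ^ 2 = m * (g |η| / |η|) * (η - ξ) ^ 2 := by ring
            _ ≤ (V η - V ξ) * (η - ξ) := hk.1
            _ = (V ξ - V η) * (ξ - η) := by ring
        · rw [abs_sub_comm (V ξ), abs_sub_comm ξ]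
          exact hk.2
    obtain ⟨hlo, hhi⟩ := hcomp r (|ξ| + |η|) hr hru hur
    have hu : (0:ℝ) < |ξ| + |η| := lt_of_lt_of_le hr hru
    have hq : (0:ℝ) ≤ g r / r := div_nonneg (hgnn r) hr.le
    constructor
    · have hA : ψ'' (|ξ| + |η|) * |ξ - η| ^ 2 ≤ (β * D * (g r / r)) * |ξ - η| ^ 2 :=
        mul_le_mul_of_nonneg_right hhi (sq_nonneg _)
      have hB : 0 ≤ ψ'' (|ξ| + |η|) * |ξ - η| ^ 2 :=
        mul_nonneg (hψpos _ hu).le (sq_nonneg _)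
      calc min (m / (β * D)) (2 * M / α) * (ψ'' (|ξ| + |η|) * |ξ - η| ^ 2)
          ≤ (m / (β * D)) * ((β * D * (g r / r)) * |ξ - η| ^ 2) :=
            mul_le_mul (min_le_left _ _) hA hB (div_pos hm hβD).le
        _ = m * (g r / r) * |ξ - η| ^ 2 := by
            rw [show (m / (β * D)) * ((β * D * (g r / r)) * |ξ - η| ^ 2)
              = (m / (β * D) * (β * D)) * ((g r / r) * |ξ - η| ^ 2) by ring,
              div_mul_cancel₀ m hβD.ne']
            ring
        _ = m * (g r / r) * (ξ - η) ^ 2 := by rw [sq_abs]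
        _ ≤ (V ξ - V η) * (ξ - η) := h1
    · have hq2 : g r / r ≤ 2 / α * ψ'' (|ξ| + |η|) := by
        rw [div_mul_eq_mul_div, le_div_iff₀ hα]
        linarith
      calc |V ξ - V η| ≤ M * (g r / r) * |ξ - η| := h2
        _ ≤ M * (2 / α * ψ'' (|ξ| + |η|)) * |ξ - η| :=
            mul_le_mul_of_nonneg_right (mul_le_mul_of_nonneg_left hq2 hMpos.le) (abs_nonneg _)
        _ = 2 * M / α * (ψ'' (|ξ| + |η|) * |ξ - η|) := by ring
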